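/- Let f : ℝ → ℝ be twice differentiable on (0,∞) and let v = (x,y,t) ∈ ℝ³ with v ≠ 0. Then the sub-Laplacian of the radial function f ∘ ρ satisfies Δ_H(f ∘ ρ)(v) = ((x² + y²)/ρ(v)²) · ( f''(ρ(v)) + 3 f'(ρ(v))/ρ(v) ). -/

import Mathlib

noncomputable section

/-- The Korányi norm ρ(x,y,t) = ((x²+y²)² + t²)^{1/4} on ℝ³ (coordinates v 0 = x,
v 1 = y, v 2 = t). -/
def rho3 (v : Fin 3 → ℝ) : ℝ := ((v 0 ^ 2 + v 1 ^ 2) ^ 2 + v 2 ^ 2) ^ ((1 : ℝ) / 4)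

/-- The horizontal derivative X u(v) = ∂ₓ u(v) + 2y ∂ₜ u(v). -/
def Xd (u : (Fin 3 → ℝ) → ℝ) (v : Fin 3 → ℝ) : ℝ :=
  fderiv ℝ u v (Pi.single 0 1) + 2 * v 1 * fderiv ℝ u v (Pi.single 2 1)

/-- The horizontal derivative Y u(v) = ∂_y u(v) − 2x ∂ₜ u(v). -/
def Yd (u : (Fin 3 → ℝ) → ℝ) (v : Fin 3 → ℝ) : ℝ :=
  fderiv ℝ u v (Pi.single 1 1) - 2 * v 0 * fderiv ℝ u v (Pi.single 2 1)

/-- The sub-Laplacian Δ_H u = X(X u) + Y(Y u). -/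
def DeltaHd (u : (Fin 3 → ℝ) → ℝ) (v : Fin 3 → ℝ) : ℝ := Xd (Xd u) v + Yd (Yd u) v

namespace Aux15

def Q3 (w : Fin 3 → ℝ) : ℝ := (w 0 ^ 2 + w 1 ^ 2) ^ 2 + w 2 ^ 2
def A3 (w : Fin 3 → ℝ) : ℝ := w 0 * (w 0 ^ 2 + w 1 ^ 2) + w 1 * w 2
def B3 (w : Fin 3 → ℝ) : ℝ := w 1 * (w 0 ^ 2 + w 1 ^ 2) - w 0 * w 2

lemma rho3_eq (w : Fin 3 → ℝ) : rho3 w = Q3 w ^ ((1:ℝ)/4) := rfl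

lemma Q3_pos {v : Fin 3 → ℝ} (hv : v ≠ 0) : 0 < Q3 v := by
  rcases lt_or_eq_of_le (by unfold Q3; positivity : (0:ℝ) ≤ Q3 v) with h | h
  · exact h
  · exfalso; apply hv
    simp only [Q3] at h
    have h0 : (v 0 ^ 2 + v 1 ^ 2) ^ 2 = 0 ∧ v 2 ^ 2 = 0 := by
      constructor <;> nlinarith [sq_nonneg (v 0 ^ 2 + v 1 ^ 2), sq_nonneg (v 2)]
    have h1 : v 0 ^ 2 + v 1 ^ 2 = 0 := by
      have := h0.1; nlinarith [sq_nonneg (v 0), sq_nonneg (v 1)]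
    have hx : v 0 = 0 := by nlinarith [sq_nonneg (v 0), sq_nonneg (v 1)]
    have hy : v 1 = 0 := by nlinarith [sq_nonneg (v 0), sq_nonneg (v 1)]
    have ht : v 2 = 0 := by have := h0.2; nlinarith
    funext i; fin_cases i <;> simpa

open ContinuousLinearMap

def pr (i : Fin 3) : (Fin 3 → ℝ) →L[ℝ] ℝ := proj i

def LQ3 (v : Fin 3 → ℝ) : (Fin 3 → ℝ) →L[ℝ] ℝ :=
  (4 * v 0 * (v 0 ^ 2 + v 1 ^ 2)) • pr 0 + (4 * v 1 * (v 0 ^ 2 + v 1 ^ 2)) • pr 1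
    + (2 * v 2) • pr 2

def LA3 (v : Fin 3 → ℝ) : (Fin 3 → ℝ) →L[ℝ] ℝ :=
  (3 * v 0 ^ 2 + v 1 ^ 2) • pr 0 + (2 * v 0 * v 1 + v 2) • pr 1 + (v 1) • pr 2

def LB3 (v : Fin 3 → ℝ) : (Fin 3 → ℝ) →L[ℝ] ℝ :=
  (2 * v 0 * v 1 - v 2) • pr 0 + (v 0 ^ 2 + 3 * v 1 ^ 2) • pr 1 + (-(v 0)) • pr 2

lemma hasFDerivAt_coord (i : Fin 3) (v : Fin 3 → ℝ) :
    HasFDerivAt (fun w : Fin 3 → ℝ => w i) (pr i) v := (pr i).hasFDerivAt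

lemma hasFDerivAt_Q3 (v : Fin 3 → ℝ) : HasFDerivAt Q3 (LQ3 v) v := by
  have h := ((((hasFDerivAt_coord 0 v).mul (hasFDerivAt_coord 0 v)).add
      ((hasFDerivAt_coord 1 v).mul (hasFDerivAt_coord 1 v))).mul
      (((hasFDerivAt_coord 0 v).mul (hasFDerivAt_coord 0 v)).add
      ((hasFDerivAt_coord 1 v).mul (hasFDerivAt_coord 1 v)))).add
      ((hasFDerivAt_coord 2 v).mul (hasFDerivAt_coord 2 v))
  refine (h.congr_fderiv ?_).congr_of_eventuallyEq ?_
  · ext w; simp [LQ3, pr]; ring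
  · exact Filter.Eventually.of_forall fun w => by simp only [Q3, Pi.mul_apply, Pi.add_apply]; ring

lemma hasFDerivAt_A3 (v : Fin 3 → ℝ) : HasFDerivAt A3 (LA3 v) v := by
  have h := ((hasFDerivAt_coord 0 v).mul (((hasFDerivAt_coord 0 v).mul (hasFDerivAt_coord 0 v)).add
      ((hasFDerivAt_coord 1 v).mul (hasFDerivAt_coord 1 v)))).add
      ((hasFDerivAt_coord 1 v).mul (hasFDerivAt_coord 2 v))
  refine (h.congr_of_eventuallyEq ?_).congr_fderiv ?_
  · exact Filter.Eventually.of_forall fun w => by simp only [A3, Pi.mul_apply, Pi.add_apply]; ring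
  · ext w
    simp only [LA3, pr, ContinuousLinearMap.add_apply, ContinuousLinearMap.smul_apply,
      ContinuousLinearMap.proj_apply, smul_eq_mul, ContinuousLinearMap.sub_apply, Pi.mul_apply, Pi.add_apply]
    ring

lemma hasFDerivAt_B3 (v : Fin 3 → ℝ) : HasFDerivAt B3 (LB3 v) v := by
  have h := ((hasFDerivAt_coord 1 v).mul (((hasFDerivAt_coord 0 v).mul (hasFDerivAt_coord 0 v)).add
      ((hasFDerivAt_coord 1 v).mul (hasFDerivAt_coord 1 v)))).sub
      ((hasFDerivAt_coord 0 v).mul (hasFDerivAt_coord 2 v))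
  refine (h.congr_of_eventuallyEq ?_).congr_fderiv ?_
  · exact Filter.Eventually.of_forall fun w => by simp only [B3, Pi.mul_apply, Pi.add_apply, Pi.sub_apply]; ring
  · ext w
    simp only [LB3, pr, ContinuousLinearMap.add_apply, ContinuousLinearMap.smul_apply,
      ContinuousLinearMap.proj_apply, smul_eq_mul, ContinuousLinearMap.sub_apply, Pi.mul_apply, Pi.add_apply,
      ContinuousLinearMap.neg_apply]
    ring

lemma hasFDerivAt_rho3 {v : Fin 3 → ℝ} (hq : 0 < Q3 v) :
    HasFDerivAt rho3 ((1/4 * Q3 v ^ ((1:ℝ)/4 - 1)) • LQ3 v) v :=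
  (Real.hasDerivAt_rpow_const (x := Q3 v) (p := (1:ℝ)/4)
    (Or.inl hq.ne')).comp_hasFDerivAt v (hasFDerivAt_Q3 v)

lemma rho3_pos {v : Fin 3 → ℝ} (hq : 0 < Q3 v) : 0 < rho3 v :=
  Real.rpow_pos_of_pos hq _

lemma LQ3_apply0 (v : Fin 3 → ℝ) : LQ3 v (Pi.single 0 1) = 4 * v 0 * (v 0 ^ 2 + v 1 ^ 2) := by
  simp [LQ3, pr, Pi.single_apply]
lemma LQ3_apply1 (v : Fin 3 → ℝ) : LQ3 v (Pi.single 1 1) = 4 * v 1 * (v 0 ^ 2 + v 1 ^ 2) := by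
  simp [LQ3, pr, Pi.single_apply]
lemma LQ3_apply2 (v : Fin 3 → ℝ) : LQ3 v (Pi.single 2 1) = 2 * v 2 := by
  simp [LQ3, pr, Pi.single_apply]
lemma LA3_apply0 (v : Fin 3 → ℝ) : LA3 v (Pi.single 0 1) = 3 * v 0 ^ 2 + v 1 ^ 2 := by
  simp [LA3, pr, Pi.single_apply]
lemma LA3_apply2 (v : Fin 3 → ℝ) : LA3 v (Pi.single 2 1) = v 1 := by
  simp [LA3, pr, Pi.single_apply]
lemma LB3_apply1 (v : Fin 3 → ℝ) : LB3 v (Pi.single 1 1) = v 0 ^ 2 + 3 * v 1 ^ 2 := by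
  simp [LB3, pr, Pi.single_apply]
lemma LB3_apply2 (v : Fin 3 → ℝ) : LB3 v (Pi.single 2 1) = -(v 0) := by
  simp [LB3, pr, Pi.single_apply]

lemma Xd_formula (f : ℝ → ℝ) (hf : ∀ s ∈ Set.Ioi (0 : ℝ), DifferentiableAt ℝ f s)
    {v : Fin 3 → ℝ} (hq : 0 < Q3 v) :
    Xd (fun w => f (rho3 w)) v = deriv f (rho3 v) * Q3 v ^ ((1:ℝ)/4 - 1) * A3 v := by
  have hF : HasFDerivAt (fun w => f (rho3 w))
      (deriv f (rho3 v) • ((1/4 * Q3 v ^ ((1:ℝ)/4 - 1)) • LQ3 v)) v :=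
    ((hf _ (rho3_pos hq)).hasDerivAt).comp_hasFDerivAt v (hasFDerivAt_rho3 hq)
  rw [Xd, hF.fderiv]
  simp only [ContinuousLinearMap.smul_apply, LQ3_apply0, LQ3_apply2, smul_eq_mul, A3]
  ring

lemma Yd_formula (f : ℝ → ℝ) (hf : ∀ s ∈ Set.Ioi (0 : ℝ), DifferentiableAt ℝ f s)
    {v : Fin 3 → ℝ} (hq : 0 < Q3 v) :
    Yd (fun w => f (rho3 w)) v = deriv f (rho3 v) * Q3 v ^ ((1:ℝ)/4 - 1) * B3 v := by
  have hF : HasFDerivAt (fun w => f (rho3 w))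
      (deriv f (rho3 v) • ((1/4 * Q3 v ^ ((1:ℝ)/4 - 1)) • LQ3 v)) v :=
    ((hf _ (rho3_pos hq)).hasDerivAt).comp_hasFDerivAt v (hasFDerivAt_rho3 hq)
  rw [Yd, hF.fderiv]
  simp only [ContinuousLinearMap.smul_apply, LQ3_apply1, LQ3_apply2, smul_eq_mul, B3]
  ring

lemma continuous_Q3 : Continuous Q3 :=
  (((continuous_apply 0).pow 2 |>.add ((continuous_apply 1).pow 2)).pow 2).add
    ((continuous_apply 2).pow 2)

lemma Xd_Xd_formula (f : ℝ → ℝ) (hf : ∀ s ∈ Set.Ioi (0 : ℝ), DifferentiableAt ℝ f s)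
    (hf' : ∀ s ∈ Set.Ioi (0 : ℝ), DifferentiableAt ℝ (deriv f) s)
    {v : Fin 3 → ℝ} (hq : 0 < Q3 v) :
    Xd (Xd (fun w => f (rho3 w))) v =
      deriv (deriv f) (rho3 v) * (Q3 v ^ ((1:ℝ)/4 - 1) * A3 v)
          * (Q3 v ^ ((1:ℝ)/4 - 1) * A3 v)
        - 3 * deriv f (rho3 v) * Q3 v ^ (((1:ℝ)/4 - 1) - 1) * A3 v * A3 v
        + 3 * deriv f (rho3 v) * Q3 v ^ ((1:ℝ)/4 - 1) * (v 0 ^ 2 + v 1 ^ 2) := by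
  have hopen : IsOpen {w : Fin 3 → ℝ | 0 < Q3 w} := isOpen_lt continuous_const continuous_Q3
  have hev : Xd (fun w => f (rho3 w)) =ᶠ[nhds v]
      (fun w => deriv f (rho3 w) * Q3 w ^ ((1:ℝ)/4 - 1) * A3 w) :=
    Filter.eventuallyEq_of_mem (hopen.mem_nhds hq) (fun w hw => Xd_formula f hf hw)
  rw [Xd, hev.fderiv_eq]
  have h1 : HasFDerivAt (fun w => deriv f (rho3 w))
      (deriv (deriv f) (rho3 v) • ((1/4 * Q3 v ^ ((1:ℝ)/4 - 1)) • LQ3 v)) v :=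
    ((hf' _ (rho3_pos hq)).hasDerivAt).comp_hasFDerivAt v (hasFDerivAt_rho3 hq)
  have h2 : HasFDerivAt (fun w => Q3 w ^ ((1:ℝ)/4 - 1))
      ((((1:ℝ)/4 - 1) * Q3 v ^ (((1:ℝ)/4 - 1) - 1)) • LQ3 v) v :=
    (Real.hasDerivAt_rpow_const (x := Q3 v) (p := (1:ℝ)/4 - 1)
      (Or.inl hq.ne')).comp_hasFDerivAt v (hasFDerivAt_Q3 v)
  have hG : HasFDerivAt (fun w => deriv f (rho3 w) * Q3 w ^ ((1:ℝ)/4 - 1) * A3 w) _ v :=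
    (h1.mul h2).mul (hasFDerivAt_A3 v)
  rw [hG.fderiv]
  simp only [ContinuousLinearMap.add_apply, ContinuousLinearMap.smul_apply, smul_eq_mul, Pi.mul_apply,
    LQ3_apply0, LQ3_apply2, LA3_apply0, LA3_apply2]
  simp only [A3]
  ring

lemma Yd_Yd_formula (f : ℝ → ℝ) (hf : ∀ s ∈ Set.Ioi (0 : ℝ), DifferentiableAt ℝ f s)
    (hf' : ∀ s ∈ Set.Ioi (0 : ℝ), DifferentiableAt ℝ (deriv f) s)
    {v : Fin 3 → ℝ} (hq : 0 < Q3 v) :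
    Yd (Yd (fun w => f (rho3 w))) v =
      deriv (deriv f) (rho3 v) * (Q3 v ^ ((1:ℝ)/4 - 1) * B3 v)
          * (Q3 v ^ ((1:ℝ)/4 - 1) * B3 v)
        - 3 * deriv f (rho3 v) * Q3 v ^ (((1:ℝ)/4 - 1) - 1) * B3 v * B3 v
        + 3 * deriv f (rho3 v) * Q3 v ^ ((1:ℝ)/4 - 1) * (v 0 ^ 2 + v 1 ^ 2) := by
  have hopen : IsOpen {w : Fin 3 → ℝ | 0 < Q3 w} := isOpen_lt continuous_const continuous_Q3
  have hev : Yd (fun w => f (rho3 w)) =ᶠ[nhds v]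
      (fun w => deriv f (rho3 w) * Q3 w ^ ((1:ℝ)/4 - 1) * B3 w) :=
    Filter.eventuallyEq_of_mem (hopen.mem_nhds hq) (fun w hw => Yd_formula f hf hw)
  rw [Yd, hev.fderiv_eq]
  have h1 : HasFDerivAt (fun w => deriv f (rho3 w))
      (deriv (deriv f) (rho3 v) • ((1/4 * Q3 v ^ ((1:ℝ)/4 - 1)) • LQ3 v)) v :=
    ((hf' _ (rho3_pos hq)).hasDerivAt).comp_hasFDerivAt v (hasFDerivAt_rho3 hq)
  have h2 : HasFDerivAt (fun w => Q3 w ^ ((1:ℝ)/4 - 1))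
      ((((1:ℝ)/4 - 1) * Q3 v ^ (((1:ℝ)/4 - 1) - 1)) • LQ3 v) v :=
    (Real.hasDerivAt_rpow_const (x := Q3 v) (p := (1:ℝ)/4 - 1)
      (Or.inl hq.ne')).comp_hasFDerivAt v (hasFDerivAt_Q3 v)
  have hG : HasFDerivAt (fun w => deriv f (rho3 w) * Q3 w ^ ((1:ℝ)/4 - 1) * B3 w) _ v :=
    (h1.mul h2).mul (hasFDerivAt_B3 v)
  rw [hG.fderiv]
  simp only [ContinuousLinearMap.add_apply, ContinuousLinearMap.smul_apply, smul_eq_mul, Pi.mul_apply,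
    LQ3_apply1, LQ3_apply2, LB3_apply1, LB3_apply2]
  simp only [B3]
  ring

end Aux15

open Aux15 in
/-- for f twice differentiable on (0,∞) and v ≠ 0,
`Δ_H(f ∘ ρ)(v) = ((x²+y²)/ρ(v)²)·(f''(ρ(v)) + 3 f'(ρ(v))/ρ(v))`. -/
theorem stmt15 (f : ℝ → ℝ)
    (hf : ∀ s ∈ Set.Ioi (0 : ℝ), DifferentiableAt ℝ f s)
    (hf' : ∀ s ∈ Set.Ioi (0 : ℝ), DifferentiableAt ℝ (deriv f) s)
    (v : Fin 3 → ℝ) (hv : v ≠ 0) :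
    DeltaHd (fun w => f (rho3 w)) v =
      ((v 0 ^ 2 + v 1 ^ 2) / rho3 v ^ 2) *
        (deriv (deriv f) (rho3 v) + 3 * deriv f (rho3 v) / rho3 v) := by
  have hq : 0 < Q3 v := Q3_pos hv
  have hs : 0 < rho3 v := rho3_pos hq
  have hs4 : Q3 v = rho3 v ^ 4 := by
    rw [rho3_eq, ← Real.rpow_natCast (Q3 v ^ ((1:ℝ)/4)) 4, ← Real.rpow_mul hq.le]
    norm_num
  have hE1 : Q3 v ^ ((1:ℝ)/4 - 1) = (rho3 v ^ 3)⁻¹ := by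
    rw [show ((1:ℝ)/4 - 1) = ((1:ℝ)/4) * (-3) by norm_num, Real.rpow_mul hq.le, ← rho3_eq,
      show (-3 : ℝ) = ((-3 : ℤ) : ℝ) by norm_num, Real.rpow_intCast, zpow_neg]
    norm_cast
  have hE2 : Q3 v ^ (((1:ℝ)/4 - 1) - 1) = (rho3 v ^ 7)⁻¹ := by
    rw [show (((1:ℝ)/4 - 1) - 1) = ((1:ℝ)/4) * (-7) by norm_num, Real.rpow_mul hq.le, ← rho3_eq,
      show (-7 : ℝ) = ((-7 : ℤ) : ℝ) by norm_num, Real.rpow_intCast, zpow_neg]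
    norm_cast
  rw [DeltaHd, Xd_Xd_formula f hf hf' hq, Yd_Yd_formula f hf hf' hq, hE1, hE2]
  have hAB : A3 v * A3 v + B3 v * B3 v = (v 0 ^ 2 + v 1 ^ 2) * rho3 v ^ 4 := by
    rw [← hs4]; simp only [A3, B3, Q3]; ring
  field_simp
  linear_combination (deriv (deriv f) (rho3 v) * rho3 v
    - 3 * deriv f (rho3 v)) * hAB


end
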